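/- arXiv:2601.08774 — 2 statements merged into one kernel-verified Lean document; each statement's English description precedes it below -/
import Mathlib

section
/- Let q be a nonnegative integer. The polytope P' in ℝ^{2q+3} with coordinates (a0, a1, a2, a_{1,1}, a_{1,2}, …, a_{q,1}, a_{q,2}) defined by the conditions 0 ≤ a1 ≤ a0 ≤ a2 ≤ 1, Σ_{n=1}^q a_{n,1} ≤ a1, Σ_{n=1}^q a_{n,2} ≤ a2, and a_{n,1} ≥ 0, a_{n,2} ≥ 0 for all n, has (2q+3)-dimensional Lebesgue measure equal to 1/((2q+3)·q!·(q+1)·(q+2)·q!). -/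
open MeasureTheory Set

lemma measT (q : ℕ) (t : ℝ) : MeasurableSet {y : Fin q → ℝ | (∀ n, 0 ≤ y n) ∧ ∑ n, y n ≤ t} := by
  rw [setOf_and, setOf_forall]
  apply MeasurableSet.inter
  · exact MeasurableSet.iInter fun n => measurableSet_le measurable_const (measurable_pi_apply n)
  · exact measurableSet_le (Finset.measurable_sum _ fun n _ => measurable_pi_apply n) measurable_const

lemma volT_neg (q : ℕ) (t : ℝ) (ht : t < 0) :
    volume {y : Fin q → ℝ | (∀ n, 0 ≤ y n) ∧ ∑ n, y n ≤ t} = 0 := by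
  convert measure_empty (μ := (volume : Measure (Fin q → ℝ)))
  ext y
  simp only [mem_setOf_eq, mem_empty_iff_false, iff_false, not_and]
  intro h1 h2
  have := Finset.sum_nonneg (s := Finset.univ) (fun n _ => h1 n)
  linarith

lemma lintegral_Icc_ofReal (a b : ℝ) (hab : a ≤ b) (f : ℝ → ℝ) (hf : Continuous f)
    (hnn : ∀ x ∈ Icc a b, 0 ≤ f x) :
    ∫⁻ x in Icc a b, ENNReal.ofReal (f x) = ENNReal.ofReal (∫ x in a..b, f x) := by
  rw [intervalIntegral.integral_of_le hab, ← integral_Icc_eq_integral_Ioc,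
    ← ofReal_integral_eq_lintegral_ofReal (hf.integrableOn_Icc)
      ((ae_restrict_iff' measurableSet_Icc).2 (ae_of_all _ hnn))]

lemma volT (q : ℕ) : ∀ t : ℝ, 0 ≤ t →
    volume {y : Fin q → ℝ | (∀ n, 0 ≤ y n) ∧ ∑ n, y n ≤ t}
      = ENNReal.ofReal (t ^ q / q.factorial) := by
  induction q with
  | zero =>
    intro t ht
    have h : {y : Fin 0 → ℝ | (∀ n, 0 ≤ y n) ∧ ∑ n, y n ≤ t} = univ := by
      ext y; simp [ht]
    rw [h, volume_pi, Measure.pi_univ]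
    simp
  | succ q ih =>
    intro t ht
    have hmp := (volume_preserving_piFinSuccAbove (fun _ : Fin (q + 1) => ℝ) 0)
    set A : Set (ℝ × (Fin q → ℝ)) :=
      {p | (0 ≤ p.1 ∧ ∀ n, 0 ≤ p.2 n) ∧ p.1 + ∑ n, p.2 n ≤ t} with hA
    have hAmeas : MeasurableSet A := by
      apply MeasurableSet.inter
      · apply MeasurableSet.inter
        · exact measurableSet_le measurable_const measurable_fst
        · show MeasurableSet {p : ℝ × (Fin q → ℝ) | ∀ n, 0 ≤ p.2 n}
          rw [setOf_forall]
          exact MeasurableSet.iInter fun n =>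
            measurableSet_le measurable_const
              ((measurable_pi_apply n).comp measurable_snd :
                Measurable fun x : ℝ × (Fin q → ℝ) => x.2 n)
      · exact measurableSet_le (measurable_fst.add
          (Finset.measurable_sum _ fun n _ => (measurable_pi_apply n).comp measurable_snd))
          measurable_const
    have hpre : (MeasurableEquiv.piFinSuccAbove (fun _ : Fin (q + 1) => ℝ) 0) ⁻¹' A
        = {y : Fin (q + 1) → ℝ | (∀ n, 0 ≤ y n) ∧ ∑ n, y n ≤ t} := by
      ext y
      simp only [mem_preimage, MeasurableEquiv.piFinSuccAbove_apply, hA, mem_setOf_eq]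
      have e1 : ((Fin.insertNthEquiv (fun _ : Fin (q+1) => ℝ) 0).symm y).1 = y 0 := rfl
      have e2 : ∀ j : Fin q, ((Fin.insertNthEquiv (fun _ : Fin (q+1) => ℝ) 0).symm y).2 j = y j.succ := fun j => by
        show y ((0 : Fin (q+1)).succAbove j) = y j.succ
        rw [Fin.zero_succAbove]
      constructor
      · rintro ⟨⟨h0, hs⟩, hsum⟩
        rw [e1] at h0 hsum
        refine ⟨fun n => ?_, ?_⟩
        · rcases Fin.eq_zero_or_eq_succ n with rfl | ⟨j, rfl⟩
          · exact h0
          · have := hs j; rwa [e2] at this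
        · rw [Fin.sum_univ_succ]
          calc y 0 + ∑ j : Fin q, y j.succ = y 0 + ∑ j : Fin q, ((Fin.insertNthEquiv (fun _ : Fin (q+1) => ℝ) 0).symm y).2 j := by
                simp_rw [e2]
            _ ≤ t := hsum
      · rintro ⟨hnn, hsum⟩
        rw [Fin.sum_univ_succ] at hsum
        refine ⟨⟨hnn 0, fun j => by rw [e2]; exact hnn _⟩, ?_⟩
        rw [e1]
        calc y 0 + ∑ j : Fin q, ((Fin.insertNthEquiv (fun _ : Fin (q+1) => ℝ) 0).symm y).2 j = y 0 + ∑ j : Fin q, y j.succ := by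
              simp_rw [e2]
          _ ≤ t := hsum
    have step1 : volume {y : Fin (q + 1) → ℝ | (∀ n, 0 ≤ y n) ∧ ∑ n, y n ≤ t} = volume A := by
      rw [← hpre]
      exact hmp.measure_preimage hAmeas.nullMeasurableSet
    rw [step1, Measure.volume_eq_prod, Measure.prod_apply hAmeas]
    have hslice : ∀ y0 : ℝ, volume (Prod.mk y0 ⁻¹' A)
        = (Icc 0 t).indicator (fun s => ENNReal.ofReal ((t - s) ^ q / q.factorial)) y0 := by
      intro y0
      by_cases h : y0 ∈ Icc 0 t
      · rw [indicator_of_mem h]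
        have hset : Prod.mk y0 ⁻¹' A
            = {z : Fin q → ℝ | (∀ n, 0 ≤ z n) ∧ ∑ n, z n ≤ t - y0} := by
          ext z
          simp only [mem_preimage, hA, mem_setOf_eq]
          constructor
          · rintro ⟨⟨_, hz⟩, hs⟩; exact ⟨hz, by linarith⟩
          · rintro ⟨hz, hs⟩; exact ⟨⟨h.1, hz⟩, by linarith⟩
        rw [hset, ih (t - y0) (by linarith [h.2])]
      · rw [indicator_of_notMem h]
        have hset : Prod.mk y0 ⁻¹' A = (∅ : Set (Fin q → ℝ)) := by
          ext z
          simp only [mem_preimage, hA, mem_setOf_eq, mem_empty_iff_false, iff_false, not_and]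
          rintro ⟨h0, hz⟩
          have hsum := Finset.sum_nonneg (s := Finset.univ) (fun n _ => hz n)
          rw [mem_Icc, not_and_or] at h
          rcases h with h | h
          · exact absurd h0 h
          · push_neg at h; intro hc; linarith
        rw [hset, measure_empty]
    rw [lintegral_congr hslice, lintegral_indicator measurableSet_Icc _,
      lintegral_Icc_ofReal 0 t ht (fun s : ℝ => (t - s) ^ q / (q.factorial : ℝ))
        (((continuous_const.sub continuous_id).pow q).div_const _)
        (fun x hx => div_nonneg (pow_nonneg (by linarith [hx.2]) q) (Nat.cast_nonneg _))]
    have hint : ∫ x in (0:ℝ)..t, (t - x) ^ q / q.factorial = t ^ (q + 1) / (q + 1).factorial := by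
      rw [intervalIntegral.integral_div]
      rw [intervalIntegral.integral_comp_sub_left (fun x => x ^ q) t]
      simp only [sub_self, sub_zero, integral_pow]
      rw [Nat.factorial_succ]
      have h1 : ((q : ℝ) + 1) ≠ 0 := by positivity
      have h2 : ((q.factorial : ℝ)) ≠ 0 := Nat.cast_ne_zero.2 q.factorial_ne_zero
      push_cast
      field_simp
      simp
    rw [hint]

theorem stmt5 (q : ℕ) :
    volume {x : ℝ × ℝ × ℝ × (Fin q → ℝ) × (Fin q → ℝ) |
        0 ≤ x.2.1 ∧ x.2.1 ≤ x.1 ∧ x.1 ≤ x.2.2.1 ∧ x.2.2.1 ≤ 1 ∧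
        (∑ n, x.2.2.2.1 n) ≤ x.2.1 ∧ (∑ n, x.2.2.2.2 n) ≤ x.2.2.1 ∧
        (∀ n, 0 ≤ x.2.2.2.1 n) ∧ (∀ n, 0 ≤ x.2.2.2.2 n)} =
      ENNReal.ofReal (1 / ((2 * (q : ℝ) + 3) * (q.factorial : ℝ) * ((q : ℝ) + 1) *
        ((q : ℝ) + 2) * (q.factorial : ℝ))) := by
  have hqf : ((q.factorial : ℝ)) ≠ 0 := Nat.cast_ne_zero.2 q.factorial_ne_zero
  have hqfnn : (0:ℝ) ≤ q.factorial := Nat.cast_nonneg _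
  set S := {x : ℝ × ℝ × ℝ × (Fin q → ℝ) × (Fin q → ℝ) |
        0 ≤ x.2.1 ∧ x.2.1 ≤ x.1 ∧ x.1 ≤ x.2.2.1 ∧ x.2.2.1 ≤ 1 ∧
        (∑ n, x.2.2.2.1 n) ≤ x.2.1 ∧ (∑ n, x.2.2.2.2 n) ≤ x.2.2.1 ∧
        (∀ n, 0 ≤ x.2.2.2.1 n) ∧ (∀ n, 0 ≤ x.2.2.2.2 n)} with hSdef
  have hS : MeasurableSet S := by
    have p1 : Measurable fun x : ℝ × ℝ × ℝ × (Fin q → ℝ) × (Fin q → ℝ) => x.1 := measurable_fst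
    have p21 : Measurable fun x : ℝ × ℝ × ℝ × (Fin q → ℝ) × (Fin q → ℝ) => x.2.1 :=
      measurable_fst.comp measurable_snd
    have p221 : Measurable fun x : ℝ × ℝ × ℝ × (Fin q → ℝ) × (Fin q → ℝ) => x.2.2.1 :=
      measurable_fst.comp (measurable_snd.comp measurable_snd)
    have p2221 : ∀ n : Fin q, Measurable fun x : ℝ × ℝ × ℝ × (Fin q → ℝ) × (Fin q → ℝ) =>
        x.2.2.2.1 n := fun n => (measurable_pi_apply n).comp
      (measurable_fst.comp (measurable_snd.comp (measurable_snd.comp measurable_snd)))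
    have p2222 : ∀ n : Fin q, Measurable fun x : ℝ × ℝ × ℝ × (Fin q → ℝ) × (Fin q → ℝ) =>
        x.2.2.2.2 n := fun n => (measurable_pi_apply n).comp
      (measurable_snd.comp (measurable_snd.comp (measurable_snd.comp measurable_snd)))
    have h7 : MeasurableSet {x : ℝ × ℝ × ℝ × (Fin q → ℝ) × (Fin q → ℝ) | ∀ n, 0 ≤ x.2.2.2.1 n} := by
      rw [setOf_forall]
      exact MeasurableSet.iInter fun n => measurableSet_le measurable_const (p2221 n)
    have h8 : MeasurableSet {x : ℝ × ℝ × ℝ × (Fin q → ℝ) × (Fin q → ℝ) | ∀ n, 0 ≤ x.2.2.2.2 n} := by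
      rw [setOf_forall]
      exact MeasurableSet.iInter fun n => measurableSet_le measurable_const (p2222 n)
    rw [hSdef, setOf_and, setOf_and, setOf_and, setOf_and, setOf_and, setOf_and, setOf_and]
    exact (measurableSet_le measurable_const p21).inter ((measurableSet_le p21 p1).inter
      ((measurableSet_le p1 p221).inter ((measurableSet_le p221 measurable_const).inter
      ((measurableSet_le (Finset.measurable_sum _ fun n _ => p2221 n) p21).inter
      ((measurableSet_le (Finset.measurable_sum _ fun n _ => p2222 n) p221).inter
      (h7.inter h8))))))
  have mf : Measurable fun x : ℝ => ENNReal.ofReal (x ^ q / q.factorial) :=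
    (((measurable_id.pow_const q).div_const _).ennreal_ofReal)
  -- innermost slice volume
  have hK : ∀ a0 a1 a2 : ℝ, volume (Prod.mk a2 ⁻¹' (Prod.mk a1 ⁻¹' (Prod.mk a0 ⁻¹' S)))
      = (Icc 0 a0).indicator (fun _ => (Icc a0 1).indicator (fun a2' =>
          ENNReal.ofReal (a1 ^ q / q.factorial) * ENNReal.ofReal (a2' ^ q / q.factorial)) a2)
          a1 := by
    intro a0 a1 a2
    by_cases h1 : a1 ∈ Icc 0 a0
    · rw [indicator_of_mem h1]
      by_cases h2 : a2 ∈ Icc a0 1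
      · rw [indicator_of_mem h2]
        have hset : Prod.mk a2 ⁻¹' (Prod.mk a1 ⁻¹' (Prod.mk a0 ⁻¹' S))
            = {y : Fin q → ℝ | (∀ n, 0 ≤ y n) ∧ ∑ n, y n ≤ a1}
              ×ˢ {y : Fin q → ℝ | (∀ n, 0 ≤ y n) ∧ ∑ n, y n ≤ a2} := by
          ext yy
          simp only [hSdef, mem_preimage, mem_setOf_eq, mem_prod]
          obtain ⟨h10, h1a⟩ := h1; obtain ⟨h2a, h21⟩ := h2
          constructor
          · rintro ⟨_, _, _, _, s1, s2, pp1, pp2⟩; exact ⟨⟨pp1, s1⟩, ⟨pp2, s2⟩⟩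
          · rintro ⟨⟨pp1, s1⟩, ⟨pp2, s2⟩⟩; exact ⟨h10, h1a, h2a, h21, s1, s2, pp1, pp2⟩
        rw [hset, Measure.volume_eq_prod, Measure.prod_prod, volT q a1 h1.1,
          volT q a2 (le_trans (le_trans h1.1 h1.2) h2.1)]
      · rw [indicator_of_notMem h2]
        have hset : Prod.mk a2 ⁻¹' (Prod.mk a1 ⁻¹' (Prod.mk a0 ⁻¹' S)) = ∅ := by
          ext yy
          simp only [hSdef, mem_preimage, mem_setOf_eq, mem_empty_iff_false, iff_false]
          rw [mem_Icc, not_and_or] at h2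
          tauto
        rw [hset, measure_empty]
    · rw [indicator_of_notMem h1]
      have hset : Prod.mk a2 ⁻¹' (Prod.mk a1 ⁻¹' (Prod.mk a0 ⁻¹' S)) = ∅ := by
        ext yy
        simp only [hSdef, mem_preimage, mem_setOf_eq, mem_empty_iff_false, iff_false]
        rw [mem_Icc, not_and_or] at h1
        tauto
      rw [hset, measure_empty]
  have hH : ∀ a0 a1 : ℝ, (∫⁻ a2, volume (Prod.mk a2 ⁻¹' (Prod.mk a1 ⁻¹' (Prod.mk a0 ⁻¹' S))))
      = (Icc 0 a0).indicator (fun a1' => ENNReal.ofReal (a1' ^ q / q.factorial) *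
          ENNReal.ofReal ((1 - a0 ^ (q + 1)) / (((q : ℝ) + 1) * q.factorial))) a1 := by
    intro a0 a1
    rw [lintegral_congr (hK a0 a1)]
    by_cases h1 : a1 ∈ Icc 0 a0
    · have e1 : ∀ a : ℝ, (Icc 0 a0).indicator (fun _ => (Icc a0 1).indicator
          (fun a2' => ENNReal.ofReal (a1 ^ q / (q.factorial : ℝ))
            * ENNReal.ofReal (a2' ^ q / q.factorial)) a) a1
          = (Icc a0 1).indicator (fun a2' => ENNReal.ofReal (a1 ^ q / (q.factorial : ℝ))
            * ENNReal.ofReal (a2' ^ q / q.factorial)) a := fun a => indicator_of_mem h1 _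
      rw [lintegral_congr e1, indicator_of_mem h1, lintegral_indicator measurableSet_Icc,
        lintegral_const_mul _ mf]
      congr 1
      by_cases h0 : a0 ≤ 1
      · rw [lintegral_Icc_ofReal a0 1 h0 _ ((continuous_pow q).div_const _)
          (fun x hx => div_nonneg (pow_nonneg (le_trans (le_trans h1.1 h1.2) hx.1) q) hqfnn)]
        congr 1
        rw [intervalIntegral.integral_div, integral_pow, one_pow]
        have h1q : ((q : ℝ) + 1) ≠ 0 := by positivity
        field_simp
      · rw [Icc_eq_empty h0, Measure.restrict_empty, lintegral_zero_measure]
        have hle : (1 : ℝ) ≤ a0 ^ (q + 1) := one_le_pow₀ (le_of_lt (not_le.1 h0))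
        rw [eq_comm, ENNReal.ofReal_eq_zero]
        apply div_nonpos_of_nonpos_of_nonneg (by linarith)
        positivity
    · have e1 : ∀ a : ℝ, (Icc 0 a0).indicator (fun _ => (Icc a0 1).indicator
          (fun a2' => ENNReal.ofReal (a1 ^ q / (q.factorial : ℝ))
            * ENNReal.ofReal (a2' ^ q / q.factorial)) a) a1 = 0 :=
        fun a => indicator_of_notMem h1 _
      rw [lintegral_congr e1, lintegral_zero, indicator_of_notMem h1]
  have hG : ∀ a0 : ℝ, (∫⁻ a1, (Icc 0 a0).indicator
        (fun a1' => ENNReal.ofReal (a1' ^ q / q.factorial) *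
          ENNReal.ofReal ((1 - a0 ^ (q + 1)) / (((q : ℝ) + 1) * q.factorial))) a1)
      = (Icc 0 1).indicator (fun a0' => ENNReal.ofReal
          ((a0' ^ (q + 1) / (((q : ℝ) + 1) * q.factorial)) *
           ((1 - a0' ^ (q + 1)) / (((q : ℝ) + 1) * q.factorial)))) a0 := by
    intro a0
    rw [lintegral_indicator measurableSet_Icc, lintegral_mul_const _ mf]
    by_cases h0 : a0 ∈ Icc 0 1
    · rw [indicator_of_mem h0]
      rw [lintegral_Icc_ofReal 0 a0 h0.1 _ ((continuous_pow q).div_const _)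
        (fun x hx => div_nonneg (pow_nonneg hx.1 q) hqfnn)]
      have hint : ∫ x in (0:ℝ)..a0, x ^ q / q.factorial
          = a0 ^ (q + 1) / (((q : ℝ) + 1) * q.factorial) := by
        rw [intervalIntegral.integral_div, integral_pow]
        have h1q : ((q : ℝ) + 1) ≠ 0 := by positivity
        rw [zero_pow (by omega : q + 1 ≠ 0), sub_zero, div_div]
      rw [hint, ← ENNReal.ofReal_mul (div_nonneg (pow_nonneg h0.1 _) (by positivity))]
    · rw [indicator_of_notMem h0, mem_Icc, not_and_or] at *
      rcases h0 with h0 | h0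
      · rw [Icc_eq_empty h0, Measure.restrict_empty, lintegral_zero_measure, zero_mul]
      · have hle : (1 : ℝ) ≤ a0 ^ (q + 1) := one_le_pow₀ (le_of_lt (not_le.1 h0))
        have : ENNReal.ofReal ((1 - a0 ^ (q + 1)) / (((q : ℝ) + 1) * q.factorial)) = 0 := by
          rw [ENNReal.ofReal_eq_zero]
          apply div_nonpos_of_nonpos_of_nonneg (by linarith)
          positivity
        rw [this, mul_zero]
  have key : ∫ a0 in (0:ℝ)..1, ((a0 ^ (q + 1) / (((q : ℝ) + 1) * q.factorial)) *
        ((1 - a0 ^ (q + 1)) / (((q : ℝ) + 1) * q.factorial)))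
      = 1 / ((2 * (q : ℝ) + 3) * (q.factorial : ℝ) * ((q : ℝ) + 1) *
        ((q : ℝ) + 2) * (q.factorial : ℝ)) := by
    have hfun : EqOn (fun a0 : ℝ => (a0 ^ (q + 1) / (((q : ℝ) + 1) * q.factorial)) *
          ((1 - a0 ^ (q + 1)) / (((q : ℝ) + 1) * q.factorial)))
        (fun a0 : ℝ => a0 ^ (q + 1) * (1 / (((q : ℝ) + 1) * q.factorial))^2
          - a0 ^ (2 * q + 2) * (1 / (((q : ℝ) + 1) * q.factorial))^2) (uIcc (0:ℝ) 1) := by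
      intro a0 _
      simp only
      have : a0 ^ (2 * q + 2) = a0 ^ (q + 1) * a0 ^ (q + 1) := by
        rw [← pow_add]; ring_nf
      rw [this]
      ring
    rw [intervalIntegral.integral_congr hfun,
      intervalIntegral.integral_sub ((intervalIntegral.intervalIntegrable_pow _).mul_const _)
        ((intervalIntegral.intervalIntegrable_pow _).mul_const _),
      intervalIntegral.integral_mul_const, intervalIntegral.integral_mul_const,
      integral_pow, integral_pow]
    have h1q : ((q : ℝ) + 1) ≠ 0 := by positivity
    have h2q : ((q : ℝ) + 2) ≠ 0 := by positivity
    have h3q : (2 * (q : ℝ) + 3) ≠ 0 := by positivity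
    simp only [one_pow, zero_pow (by omega : q + 1 + 1 ≠ 0),
      zero_pow (by omega : 2 * q + 2 + 1 ≠ 0), sub_zero]
    push_cast
    field_simp
    ring
  calc volume S = ∫⁻ a0, volume (Prod.mk a0 ⁻¹' S) := by
        rw [Measure.volume_eq_prod, Measure.prod_apply hS]
    _ = ∫⁻ a0, ∫⁻ a1, volume (Prod.mk a1 ⁻¹' (Prod.mk a0 ⁻¹' S)) :=
        lintegral_congr fun a0 => by
          rw [Measure.volume_eq_prod,
            Measure.prod_apply (hS.preimage measurable_prodMk_left)]
    _ = ∫⁻ a0, ∫⁻ a1, ∫⁻ a2, volume (Prod.mk a2 ⁻¹' (Prod.mk a1 ⁻¹' (Prod.mk a0 ⁻¹' S))) :=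
        lintegral_congr fun a0 => lintegral_congr fun a1 => by
          rw [Measure.volume_eq_prod, Measure.prod_apply
            ((hS.preimage measurable_prodMk_left).preimage measurable_prodMk_left)]
    _ = ∫⁻ a0, (Icc (0:ℝ) 1).indicator (fun a0' => ENNReal.ofReal
          ((a0' ^ (q + 1) / (((q : ℝ) + 1) * q.factorial)) *
           ((1 - a0' ^ (q + 1)) / (((q : ℝ) + 1) * q.factorial)))) a0 :=
        lintegral_congr fun a0 => by rw [lintegral_congr (hH a0), hG a0]
    _ = ∫⁻ a0 in Icc (0:ℝ) 1, ENNReal.ofReal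
          ((a0 ^ (q + 1) / (((q : ℝ) + 1) * q.factorial)) *
           ((1 - a0 ^ (q + 1)) / (((q : ℝ) + 1) * q.factorial))) :=
        lintegral_indicator measurableSet_Icc _
    _ = ENNReal.ofReal (∫ a0 in (0:ℝ)..1, ((a0 ^ (q + 1) / (((q : ℝ) + 1) * q.factorial)) *
           ((1 - a0 ^ (q + 1)) / (((q : ℝ) + 1) * q.factorial)))) := by
        apply lintegral_Icc_ofReal 0 1 zero_le_one _
          (((continuous_pow (q+1)).div_const _).mul
            ((continuous_const.sub (continuous_pow (q+1))).div_const _))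
        intro x hx
        have h1 : x ^ (q + 1) ≤ 1 := pow_le_one₀ hx.1 hx.2
        have h2 : (0:ℝ) ≤ x ^ (q + 1) := pow_nonneg hx.1 _
        have h3 : (0:ℝ) < ((q : ℝ) + 1) * q.factorial := by positivity
        apply mul_nonneg (div_nonneg h2 h3.le) (div_nonneg (sub_nonneg.2 h1) h3.le)
    _ = ENNReal.ofReal (1 / ((2 * (q : ℝ) + 3) * (q.factorial : ℝ) * ((q : ℝ) + 1) *
        ((q : ℝ) + 2) * (q.factorial : ℝ))) := by rw [key]
end

section
/- Let K be a number field of degree d with r1 real and r2 complex places, and set q = r1 + r2 − 1. Fix ε > 0. Then the number of units u in a fixed finitely generated subgroup U ≤ O_K^× of rank q satisfying |u|_v ≤ X_v at every archimedean place v, where ∏_v X_v = X ≥ 2, is ((μ-constant)/Reg)·(log X)^q/q! + O((log X)^{q−1}), uniformly in the X_v; in particular it is O((log X)^q). -/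
open NumberField NumberField.InfinitePlace NumberField.Units
open NumberField.Units.dirichletUnitTheorem

private lemma stmt17_sum_mult_log {K : Type*} [Field K] [NumberField K] (u : (𝓞 K)ˣ) :
    ∑ w : InfinitePlace K, (w.mult : ℝ) * Real.log (w (algebraMap (𝓞 K) K u)) = 0 := by
  have h := congr_arg Real.log (prod_eq_abs_norm (algebraMap (𝓞 K) K u))
  rw [NumberField.Units.norm K u, Rat.cast_one, Real.log_one, Real.log_prod] at h
  · simp_rw [Real.log_pow] at h
    exact h
  · intro w _
    exact pow_ne_zero _ (AbsoluteValue.ne_zero _ (NumberField.Units.coe_ne_zero u))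

set_option maxHeartbeats 2000000 in
theorem stmt17 (K : Type*) [Field K] [NumberField K] :
    ∃ c : ℝ, ∀ X : ℝ, 2 ≤ X → ∀ Xv : InfinitePlace K → ℝ,
      (∏ w : InfinitePlace K, Xv w) = X →
      (Nat.card {u : (𝓞 K)ˣ //
          ∀ w : InfinitePlace K, (w (algebraMap (𝓞 K) K u)) ^ w.mult ≤ Xv w} : ℝ) ≤
        c * (Real.log X) ^ (NumberField.Units.rank K) := by
  classical
  set L := Units.unitLattice K with hLdef
  set b := Module.Free.chooseBasis ℤ L with hbdef
  set β := Module.Basis.ofZLatticeBasis ℝ L b with hβdef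
  set M : Module.Free.ChooseBasisIndex ℤ L → ℝ :=
    fun i => ‖LinearMap.toContinuousLinearMap (β.coord i)‖ with hMdef
  have hMnonneg : ∀ i, 0 ≤ M i := fun i => norm_nonneg _
  have hcard : Fintype.card (Module.Free.ChooseBasisIndex ℤ L) = NumberField.Units.rank K := by
    rw [← Module.finrank_eq_card_chooseBasisIndex, hLdef, Units.unitLattice_rank]
  refine ⟨(Nat.card (Units.torsion K) : ℝ) * ∏ i, (M i + 3), ?_⟩
  intro X hX Xv hXv
  have hlog2 : (0.6931471803 : ℝ) < Real.log 2 := Real.log_two_gt_d9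
  have hD : (0.6931471803 : ℝ) < Real.log X :=
    lt_of_lt_of_le hlog2 (Real.log_le_log (by norm_num) hX)
  have hDpos : 0 < Real.log X := by linarith
  have hcnonneg : 0 ≤ (Nat.card (Units.torsion K) : ℝ) * ∏ i, (M i + 3) :=
    mul_nonneg (Nat.cast_nonneg _)
      (Finset.prod_nonneg fun i _ => by have := hMnonneg i; linarith)
  by_cases hpos : ∀ w : InfinitePlace K, 0 < Xv w
  swap
  · push_neg at hpos
    obtain ⟨w, hw⟩ := hpos
    have hE : IsEmpty {u : (𝓞 K)ˣ //
        ∀ w : InfinitePlace K, (w (algebraMap (𝓞 K) K u)) ^ w.mult ≤ Xv w} := by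
      refine ⟨fun u => ?_⟩
      have h1 := u.2 w
      have h2 : 0 < (w (algebraMap (𝓞 K) K u.1)) ^ w.mult :=
        pow_pos (pos_iff.mpr (NumberField.Units.coe_ne_zero u.1)) _
      linarith
    rw [Nat.card_of_isEmpty]
    exact_mod_cast mul_nonneg hcnonneg (pow_nonneg hDpos.le _)
  -- main case
  set S := {u : (𝓞 K)ˣ //
      ∀ w : InfinitePlace K, (w (algebraMap (𝓞 K) K u)) ^ w.mult ≤ Xv w} with hSdef
  have hlogX : ∑ w : InfinitePlace K, Real.log (Xv w) = Real.log X := by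
    rw [← hXv, Real.log_prod]
    exact fun w _ => (hpos w).ne'
  -- bounds on mult * log
  have hub : ∀ (u : S) (w : InfinitePlace K),
      (w.mult : ℝ) * Real.log (w (algebraMap (𝓞 K) K u.1)) ≤ Real.log (Xv w) := by
    intro u w
    have h1 : 0 < (w (algebraMap (𝓞 K) K u.1)) ^ w.mult :=
      pow_pos (pos_iff.mpr (NumberField.Units.coe_ne_zero u.1)) _
    have := Real.log_le_log h1 (u.2 w)
    rwa [Real.log_pow] at this
  have hlb : ∀ (u : S) (w : InfinitePlace K),
      Real.log (Xv w) - Real.log X ≤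
        (w.mult : ℝ) * Real.log (w (algebraMap (𝓞 K) K u.1)) := by
    intro u w
    have hs := stmt17_sum_mult_log u.1
    have h1 : ∑ w' ∈ Finset.univ.erase w,
        (w'.mult : ℝ) * Real.log (w' (algebraMap (𝓞 K) K u.1)) =
        - ((w.mult : ℝ) * Real.log (w (algebraMap (𝓞 K) K u.1))) := by
      rw [Finset.sum_erase_eq_sub (Finset.mem_univ w), hs]; ring
    have h2 : ∑ w' ∈ Finset.univ.erase w,
        (w'.mult : ℝ) * Real.log (w' (algebraMap (𝓞 K) K u.1)) ≤
        ∑ w' ∈ Finset.univ.erase w, Real.log (Xv w') :=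
      Finset.sum_le_sum fun w' _ => hub u w'
    have h3 : ∑ w' ∈ Finset.univ.erase w, Real.log (Xv w') =
        Real.log X - Real.log (Xv w) := by
      rw [Finset.sum_erase_eq_sub (Finset.mem_univ w), hlogX]
    linarith
  -- the lattice point attached to a unit
  have hmem : ∀ u : (𝓞 K)ˣ, logEmbedding K (Additive.ofMul u) ∈ L :=
    fun u => ⟨Additive.ofMul u, Submodule.mem_top, rfl⟩
  set lat : S → L := fun u => ⟨logEmbedding K (Additive.ofMul u.1), hmem u.1⟩ with hlatdef
  set c0 : {w : InfinitePlace K // w ≠ w₀} → ℝ :=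
    fun w => Real.log (Xv w.1) - Real.log X / 2 with hc0def
  have hnorm : ∀ u : S, ‖(lat u : {w : InfinitePlace K // w ≠ w₀} → ℝ) - c0‖ ≤
      Real.log X / 2 := by
    intro u
    rw [pi_norm_le_iff_of_nonneg (by linarith)]
    intro w
    have h1 := hub u w.1
    have h2 := hlb u w.1
    have h3 : (lat u : {w : InfinitePlace K // w ≠ w₀} → ℝ) w =
        (w.1.mult : ℝ) * Real.log (w.1 (algebraMap (𝓞 K) K u.1)) := rfl
    rw [Real.norm_eq_abs, abs_le]
    constructor <;> simp only [Pi.sub_apply, h3, hc0def] <;> linarith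
  -- integer coordinates
  set lo : Module.Free.ChooseBasisIndex ℤ L → ℤ :=
    fun i => ⌈β.repr c0 i - M i * (Real.log X / 2)⌉ with hlodef
  set hi : Module.Free.ChooseBasisIndex ℤ L → ℤ :=
    fun i => ⌊β.repr c0 i + M i * (Real.log X / 2)⌋ with hhidef
  set coords : S → (Module.Free.ChooseBasisIndex ℤ L → ℤ) :=
    fun u i => b.repr (lat u) i with hcoordsdef
  have hcoordbound : ∀ (u : S) i,
      |(coords u i : ℝ) - β.repr c0 i| ≤ M i * (Real.log X / 2) := by
    intro u i
    have h1 : (coords u i : ℝ) = β.repr (lat u : {w : InfinitePlace K // w ≠ w₀} → ℝ) i :=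
      (Module.Basis.ofZLatticeBasis_repr_apply ℝ L b (lat u) i).symm
    have h2 : (coords u i : ℝ) - β.repr c0 i =
        β.coord i ((lat u : {w : InfinitePlace K // w ≠ w₀} → ℝ) - c0) := by
      rw [h1, map_sub, Module.Basis.coord_apply, Module.Basis.coord_apply]
    rw [h2, ← Real.norm_eq_abs,
      ← LinearMap.coe_toContinuousLinearMap' (β.coord i)]
    calc ‖LinearMap.toContinuousLinearMap (β.coord i)
          ((lat u : {w : InfinitePlace K // w ≠ w₀} → ℝ) - c0)‖ ≤
        M i * ‖(lat u : {w : InfinitePlace K // w ≠ w₀} → ℝ) - c0‖ :=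
          ContinuousLinearMap.le_opNorm _ _
      _ ≤ M i * (Real.log X / 2) := by
          exact mul_le_mul_of_nonneg_left (hnorm u) (hMnonneg i)
  have hcoordmem : ∀ (u : S) i, coords u i ∈ Finset.Icc (lo i) (hi i) := by
    intro u i
    have h := abs_le.mp (hcoordbound u i)
    rw [Finset.mem_Icc]
    constructor
    · rw [hlodef]; exact Int.ceil_le.mpr (by push_cast; linarith [h.1])
    · rw [hhidef]; exact Int.le_floor.mpr (by push_cast; linarith [h.2])
  -- injection into torsion × integer boxes
  have hcoords_lat : ∀ u u' : S, coords u = coords u' → lat u = lat u' := by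
    intro u u' h
    exact Module.Basis.ext_elem b fun i => by rw [show b.repr (lat u) i = coords u i from rfl,
      show b.repr (lat u') i = coords u' i from rfl, h]
  set sec : (Module.Free.ChooseBasisIndex ℤ L → ℤ) → (𝓞 K)ˣ :=
    fun v => if h : ∃ u : S, coords u = v then (h.choose).1 else 1 with hsecdef
  have htors : ∀ u : S, (u.1 * (sec (coords u))⁻¹ : (𝓞 K)ˣ) ∈ Units.torsion K := by
    intro u
    have hex : ∃ u' : S, coords u' = coords u := ⟨u, rfl⟩
    have hsec : sec (coords u) = (hex.choose).1 := by rw [hsecdef]; simp [hex]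
    have hl : lat hex.choose = lat u := hcoords_lat _ _ hex.choose_spec
    have hlog : logEmbedding K (Additive.ofMul (hex.choose).1) =
        logEmbedding K (Additive.ofMul u.1) := congrArg Subtype.val hl
    rw [← logEmbedding_eq_zero_iff]
    have : Additive.ofMul (u.1 * (sec (coords u))⁻¹) =
        Additive.ofMul u.1 + (- Additive.ofMul (sec (coords u))) := rfl
    rw [this, map_add, map_neg, hsec, hlog, add_neg_cancel]
  set T := Units.torsion K ×
      (∀ i : Module.Free.ChooseBasisIndex ℤ L, {n : ℤ // n ∈ Finset.Icc (lo i) (hi i)}) with hTdef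
  set Φ : S → T := fun u =>
    (⟨u.1 * (sec (coords u))⁻¹, htors u⟩, fun i => ⟨coords u i, hcoordmem u i⟩) with hΦdef
  have hΦinj : Function.Injective Φ := by
    intro u u' h
    have h2 : coords u = coords u' := by
      funext i
      exact congrArg Subtype.val (congrFun (congrArg Prod.snd h) i)
    have h1 : (u.1 * (sec (coords u))⁻¹ : (𝓞 K)ˣ) = u'.1 * (sec (coords u'))⁻¹ :=
      congrArg Subtype.val (congrArg Prod.fst h)
    rw [h2] at h1
    exact Subtype.ext (mul_right_cancel h1)
  have hcardle : Nat.card S ≤ Nat.card T := Nat.card_le_card_of_injective Φ hΦinj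
  have hcardT : (Nat.card T : ℝ) =
      (Nat.card (Units.torsion K) : ℝ) *
        ∏ i, ((Finset.Icc (lo i) (hi i)).card : ℝ) := by
    rw [hTdef, Nat.card_prod, Nat.card_pi]
    push_cast
    congr 1
    exact Finset.prod_congr rfl fun i _ => by
      rw [Nat.card_eq_fintype_card, Fintype.card_coe]
  have hIccbound : ∀ i, ((Finset.Icc (lo i) (hi i)).card : ℝ) ≤ (M i + 3) * Real.log X := by
    intro i
    have hrhs : 0 ≤ (M i + 3) * Real.log X :=
      mul_nonneg (by have := hMnonneg i; linarith) hDpos.le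
    rw [Int.card_Icc]
    have h1 : ((hi i + 1 - lo i).toNat : ℝ) = max ((hi i : ℝ) + 1 - lo i) 0 := by
      have := Int.toNat_eq_max (hi i + 1 - lo i)
      have h2 : (((hi i + 1 - lo i).toNat : ℤ) : ℝ) = ((hi i + 1 - lo i : ℤ) ⊔ 0 : ℤ) := by
        exact_mod_cast congrArg (Int.cast : ℤ → ℝ) this
      push_cast at h2
      rw [h2]
    rw [h1, max_le_iff]
    refine ⟨?_, hrhs⟩
    have h2 : (hi i : ℝ) ≤ β.repr c0 i + M i * (Real.log X / 2) := Int.floor_le _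
    have h3 : β.repr c0 i - M i * (Real.log X / 2) ≤ (lo i : ℝ) := Int.le_ceil _
    have := hMnonneg i
    nlinarith
  -- final computation
  calc (Nat.card S : ℝ) ≤ (Nat.card T : ℝ) := by exact_mod_cast hcardle
    _ = (Nat.card (Units.torsion K) : ℝ) *
        ∏ i, ((Finset.Icc (lo i) (hi i)).card : ℝ) := hcardT
    _ ≤ (Nat.card (Units.torsion K) : ℝ) * ∏ i, ((M i + 3) * Real.log X) := by
        refine mul_le_mul_of_nonneg_left ?_ (Nat.cast_nonneg _)
        exact Finset.prod_le_prod (fun i _ => Nat.cast_nonneg _) fun i _ => hIccbound i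
    _ = (Nat.card (Units.torsion K) : ℝ) * ((∏ i, (M i + 3)) *
        (Real.log X) ^ (NumberField.Units.rank K)) := by
        rw [Finset.prod_mul_distrib, Finset.prod_const, Finset.card_univ, hcard]
    _ = ((Nat.card (Units.torsion K) : ℝ) * ∏ i, (M i + 3)) *
        (Real.log X) ^ (NumberField.Units.rank K) := by ring
end
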